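/- Let X be a connected noncompact topological space exhausted by an increasing sequence of relatively compact domains Ω₀ ⋐ Ω₁ ⋐ Ω₂ ⋐ …, equipped with a length metric induced by a Riemannian-type metric g. Then there exists a continuous function α : X → (1,∞) such that for any positive smooth function β with β ≥ α outside some compact set, the conformally rescaled metric h = β·g has the property that x ↦ dist_h(x, p) is an exhaustion function for each p ∈ X; in particular dist_h is complete. -/

import Mathlib

open MeasureTheory

/-- The length of a C¹ path `γ : [0,1] → ℝᵐ` with respect to the metric `h = β·g`, where
the Riemannian/Finsler metric `g` is given by the pointwise norm `F` and `β` is a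
positive conformal factor (so `|v|_h = √β · F(·, v)`). -/
noncomputable def wLength {m : ℕ} (β : (Fin m → ℝ) → ℝ)
    (F : (Fin m → ℝ) → (Fin m → ℝ) → ℝ) (γ : ℝ → (Fin m → ℝ)) : ℝ :=
  ∫ t in (0:ℝ)..1, Real.sqrt (β (γ t)) * F (γ t) (deriv γ t)

/-- The associated path-length distance inside `Ω`, over piecewise C^∞ (here C¹) paths. -/
noncomputable def wDist {m : ℕ} (Ω : Set (Fin m → ℝ)) (β : (Fin m → ℝ) → ℝ)
    (F : (Fin m → ℝ) → (Fin m → ℝ) → ℝ) (x y : Fin m → ℝ) : ℝ :=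
  sInf {L : ℝ | ∃ γ : ℝ → (Fin m → ℝ), ContDiffOn ℝ 1 γ (Set.Icc 0 1) ∧
    (∀ t ∈ Set.Icc (0:ℝ) 1, γ t ∈ Ω) ∧ γ 0 = x ∧ γ 1 = y ∧ L = wLength β F γ}

open Set

section Paths
variable {E : Type*} [NormedAddCommGroup E] [NormedSpace ℝ E]

/-- smoothstep -/
noncomputable def sstep (t : ℝ) : ℝ := 3 * t ^ 2 - 2 * t ^ 3

lemma sstep_hasDerivAt (t : ℝ) : HasDerivAt sstep (6 * t - 6 * t ^ 2) t := by
  have h := (((hasDerivAt_pow 2 t).const_mul 3).sub ((hasDerivAt_pow 3 t).const_mul 2))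
  exact h.congr_deriv (by ring)

lemma sstep_contDiff : ContDiff ℝ 1 sstep := by
  unfold sstep
  exact (contDiff_const.mul (contDiff_id.pow 2)).sub (contDiff_const.mul (contDiff_id.pow 3))

lemma sstep_zero : sstep 0 = 0 := by norm_num [sstep]
lemma sstep_one : sstep 1 = 1 := by norm_num [sstep]
lemma sstep_deriv_zero : deriv sstep 0 = 0 := by
  have := (sstep_hasDerivAt 0).deriv; rw [this]; norm_num
lemma sstep_deriv_one : deriv sstep 1 = 0 := by
  have := (sstep_hasDerivAt 1).deriv; rw [this]; norm_num
lemma sstep_mem (t : ℝ) (ht : t ∈ Icc (0:ℝ) 1) : sstep t ∈ Icc (0:ℝ) 1 := by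
  obtain ⟨h0, h1⟩ := ht
  simp only [sstep, mem_Icc]
  constructor
  · nlinarith [sq_nonneg t]
  · nlinarith [sq_nonneg (1 - t)]

/-- Predicate: C¹-joined within Ω with flat endpoints. -/
def JC1 (Ω : Set E) (x y : E) : Prop :=
  ∃ γ : ℝ → E, ContDiff ℝ 1 γ ∧ (∀ t ∈ Icc (0:ℝ) 1, γ t ∈ Ω) ∧
    γ 0 = x ∧ γ 1 = y ∧ deriv γ 0 = 0 ∧ deriv γ 1 = 0

lemma JC1.refl (Ω : Set E) (x : E) (hx : x ∈ Ω) : JC1 Ω x x :=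
  ⟨fun _ => x, contDiff_const, fun _ _ => hx, rfl, rfl, by simp, by simp⟩

lemma JC1.symm {Ω : Set E} {x y : E} (h : JC1 Ω x y) : JC1 Ω y x := by
  obtain ⟨γ, hγ, hmem, h0, h1, hd0, hd1⟩ := h
  refine ⟨fun t => γ (1 - t), hγ.comp (contDiff_const.sub contDiff_id), ?_, by simpa, by simpa, ?_, ?_⟩
  · intro t ht
    exact hmem (1 - t) ⟨by linarith [ht.2], by linarith [ht.1]⟩
  · have hd : ∀ t : ℝ, HasDerivAt (fun t => γ (1 - t)) ((-1 : ℝ) • deriv γ (1 - t)) t := by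
      intro t
      exact ((hγ.differentiable one_ne_zero).differentiableAt.hasDerivAt).scomp t
        ((hasDerivAt_id t).const_sub 1)
    rw [(hd 0).deriv]; simp only [sub_zero, hd1, smul_zero]
  · have hd : ∀ t : ℝ, HasDerivAt (fun t => γ (1 - t)) ((-1 : ℝ) • deriv γ (1 - t)) t := by
      intro t
      exact ((hγ.differentiable one_ne_zero).differentiableAt.hasDerivAt).scomp t
        ((hasDerivAt_id t).const_sub 1)
    rw [(hd 1).deriv]; simp only [sub_self, hd0, smul_zero]

lemma JC1.trans {Ω : Set E} {x y z : E} (hxy : JC1 Ω x y) (hyz : JC1 Ω y z) : JC1 Ω x z := by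
  classical
  obtain ⟨γ₁, hγ₁, hm₁, h10, h11, hd10, hd11⟩ := hxy
  obtain ⟨γ₂, hγ₂, hm₂, h20, h21, hd20, hd21⟩ := hyz
  set γ : ℝ → E := fun t => if t ≤ 1/2 then γ₁ (2 * t) else γ₂ (2 * t - 1) with hγdef
  set d : ℝ → E := fun t => if t ≤ 1/2 then (2:ℝ) • deriv γ₁ (2 * t) else (2:ℝ) • deriv γ₂ (2 * t - 1) with hddef
  have hγ₁d : ∀ u : ℝ, HasDerivAt (fun t : ℝ => γ₁ (2 * t)) ((2:ℝ) • deriv γ₁ (2 * u)) u := by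
    intro u
    have hin : HasDerivAt (fun t : ℝ => 2 * t) 2 u := by
      simpa using (hasDerivAt_id u).const_mul (2:ℝ)
    exact ((hγ₁.differentiable one_ne_zero).differentiableAt.hasDerivAt).scomp u hin
  have hγ₂d : ∀ u : ℝ, HasDerivAt (fun t : ℝ => γ₂ (2 * t - 1)) ((2:ℝ) • deriv γ₂ (2 * u - 1)) u := by
    intro u
    have hin : HasDerivAt (fun t : ℝ => 2 * t - 1) 2 u := by
      simpa using ((hasDerivAt_id u).const_mul (2:ℝ)).sub_const 1
    exact ((hγ₂.differentiable one_ne_zero).differentiableAt.hasDerivAt).scomp u hin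
  have hIic : ∀ t : ℝ, t ≤ 1/2 → γ t = γ₁ (2 * t) := by
    intro t ht; simp only [hγdef]; rw [if_pos ht]
  have hIci : ∀ t : ℝ, (1/2:ℝ) ≤ t → γ t = γ₂ (2 * t - 1) := by
    intro t ht
    simp only [hγdef]
    rcases eq_or_lt_of_le ht with h | h
    · rw [if_pos h.symm.le, ← h]; norm_num [h11, h20]
    · rw [if_neg (not_le.mpr h)]
  have hderiv : ∀ t : ℝ, HasDerivAt γ (d t) t := by
    intro t
    rcases lt_trichotomy t (1/2 : ℝ) with h | h | h
    · have hev : γ =ᶠ[nhds t] fun u => γ₁ (2 * u) := by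
        filter_upwards [eventually_lt_nhds h] with u hu
        exact hIic u hu.le
      have : d t = (2:ℝ) • deriv γ₁ (2 * t) := by simp only [hddef]; rw [if_pos h.le]
      rw [this]
      exact (hγ₁d t).congr_of_eventuallyEq hev
    · subst h
      have hz : d (1/2 : ℝ) = 0 := by
        simp only [hddef]; rw [if_pos le_rfl]; norm_num [hd11]
      rw [hz]
      have hL : HasDerivWithinAt γ 0 (Iic (1/2 : ℝ)) (1/2 : ℝ) := by
        have h1 : HasDerivWithinAt (fun u : ℝ => γ₁ (2 * u)) 0 (Iic (1/2 : ℝ)) (1/2 : ℝ) := by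
          have := (hγ₁d (1/2)).hasDerivWithinAt (s := Iic (1/2 : ℝ))
          norm_num [hd11] at this ⊢
          exact this
        exact h1.congr (fun u hu => hIic u (mem_Iic.mp hu)) (hIic _ le_rfl)
      have hR : HasDerivWithinAt γ 0 (Ici (1/2 : ℝ)) (1/2 : ℝ) := by
        have h1 : HasDerivWithinAt (fun u : ℝ => γ₂ (2 * u - 1)) 0 (Ici (1/2 : ℝ)) (1/2 : ℝ) := by
          have := (hγ₂d (1/2)).hasDerivWithinAt (s := Ici (1/2 : ℝ))
          norm_num [hd20] at this ⊢
          exact this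
        exact h1.congr (fun u hu => hIci u (mem_Ici.mp hu)) (hIci _ le_rfl)
      have := hL.union hR
      rw [Iic_union_Ici] at this
      rw [hasDerivWithinAt_univ] at this
      exact this
    · have hev : γ =ᶠ[nhds t] fun u => γ₂ (2 * u - 1) := by
        filter_upwards [eventually_gt_nhds h] with u hu
        exact hIci u hu.le
      have : d t = (2:ℝ) • deriv γ₂ (2 * t - 1) := by
        simp only [hddef]; rw [if_neg (not_le.mpr h)]
      rw [this]
      exact (hγ₂d t).congr_of_eventuallyEq hev
  have hdcont : Continuous d := by
    have hc₁ : Continuous fun t : ℝ => (2:ℝ) • deriv γ₁ (2 * t) := by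
      exact ((hγ₁.continuous_deriv le_rfl).comp (continuous_const.mul continuous_id)).const_smul 2
    have hc₂ : Continuous fun t : ℝ => (2:ℝ) • deriv γ₂ (2 * t - 1) := by
      exact ((hγ₂.continuous_deriv le_rfl).comp ((continuous_const.mul continuous_id).sub
        continuous_const)).const_smul 2
    refine hc₁.if_le hc₂ continuous_id continuous_const ?_
    intro t ht
    subst ht
    norm_num [hd11, hd20]
  have hγc1 : ContDiff ℝ 1 γ := by
    rw [contDiff_one_iff_deriv]
    refine ⟨fun t => (hderiv t).differentiableAt, ?_⟩
    have : deriv γ = d := funext fun t => (hderiv t).deriv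
    rw [this]; exact hdcont
  refine ⟨γ, hγc1, ?_, ?_, ?_, ?_, ?_⟩
  · intro t ht
    by_cases h : t ≤ 1/2
    · rw [hIic t h]
      exact hm₁ _ ⟨by linarith [ht.1], by linarith [h]⟩
    · rw [hIci t (le_of_not_ge h)]
      exact hm₂ _ ⟨by push_neg at h; linarith, by linarith [ht.2]⟩
  · rw [hIic 0 (by norm_num)]; simpa using h10
  · rw [hIci 1 (by norm_num)]; norm_num [h21]
  · rw [(hderiv 0).deriv]
    simp only [hddef]; rw [if_pos (by norm_num)]; norm_num [hd10]
  · rw [(hderiv 1).deriv]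
    simp only [hddef]; rw [if_neg (by norm_num)]; norm_num [hd21]

/-- straight segment, reparametrized -/
lemma JC1.segment {Ω : Set E} {x y : E} (h : segment ℝ x y ⊆ Ω) : JC1 Ω x y := by
  set γ : ℝ → E := fun t => x + sstep t • (y - x) with hγdef
  have hd : ∀ t : ℝ, HasDerivAt γ ((6 * t - 6 * t ^ 2) • (y - x)) t := by
    intro t
    exact ((sstep_hasDerivAt t).smul_const (y - x)).const_add x
  refine ⟨γ, ?_, ?_, ?_, ?_, ?_, ?_⟩
  · exact contDiff_const.add (sstep_contDiff.smul contDiff_const)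
  · intro t ht
    apply h
    rcases sstep_mem t ht with ⟨h0, h1⟩
    exact ⟨1 - sstep t, sstep t, by linarith, h0, by ring, by module⟩
  · simp [hγdef, sstep_zero]
  · simp [hγdef, sstep_one]
  · rw [(hd 0).deriv]; norm_num
  · rw [(hd 1).deriv]; norm_num

/-- C¹ path connectivity of open connected sets -/
lemma IsConnected.jc1 {Ω : Set E} (hΩo : IsOpen Ω) (hΩc : IsConnected Ω)
    {x y : E} (hx : x ∈ Ω) (hy : y ∈ Ω) : JC1 Ω x y := by
  set S : Set E := {z ∈ Ω | JC1 Ω x z} with hSdef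
  have hball : ∀ z ∈ Ω, ∃ r > 0, Metric.ball z r ⊆ Ω ∧ ∀ w ∈ Metric.ball z r, JC1 Ω z w := by
    intro z hz
    obtain ⟨r, hr, hball⟩ := Metric.isOpen_iff.mp hΩo z hz
    refine ⟨r, hr, hball, fun w hw => JC1.segment ?_⟩
    intro u hu
    exact hball ((convex_ball z r).segment_subset (Metric.mem_ball_self hr) hw hu)
  by_contra hne
  have hyS : y ∈ Ω \ S := ⟨hy, fun h => hne h.2⟩
  -- U : union of balls around points of S ; V similar for Ω \ S
  choose! r hrpos hrball hrj using hball
  set U : Set E := ⋃ z ∈ S, Metric.ball z (r z) with hU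
  set V : Set E := ⋃ z ∈ Ω \ S, Metric.ball z (r z) with hV
  have hUS : Ω ∩ U ⊆ S := by
    rintro w ⟨hwΩ, hwU⟩
    simp only [hU, mem_iUnion] at hwU
    obtain ⟨z, hzS, hwz⟩ := hwU
    exact ⟨hwΩ, hzS.2.trans (hrj z hzS.1 w hwz)⟩
  have hVS : Ω ∩ V ⊆ Ω \ S := by
    rintro w ⟨hwΩ, hwV⟩
    simp only [hV, mem_iUnion] at hwV
    obtain ⟨z, hzV, hwz⟩ := hwV
    refine ⟨hwΩ, fun hwS => hzV.2 ⟨hzV.1, hwS.2.trans (hrj z hzV.1 w hwz).symm⟩⟩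
  have hcov : Ω ⊆ U ∪ V := by
    intro z hz
    by_cases hzS : z ∈ S
    · exact Or.inl (mem_iUnion₂.mpr ⟨z, hzS, Metric.mem_ball_self (hrpos z hz)⟩)
    · exact Or.inr (mem_iUnion₂.mpr ⟨z, ⟨hz, hzS⟩, Metric.mem_ball_self (hrpos z hz)⟩)
  have hUopen : IsOpen U := isOpen_biUnion fun _ _ => Metric.isOpen_ball
  have hVopen : IsOpen V := isOpen_biUnion fun _ _ => Metric.isOpen_ball
  have hxS : x ∈ S := ⟨hx, JC1.refl Ω x hx⟩
  have h1 : (Ω ∩ U).Nonempty := ⟨x, hx, mem_iUnion₂.mpr ⟨x, hxS, Metric.mem_ball_self (hrpos x hx)⟩⟩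
  have h2 : (Ω ∩ V).Nonempty := ⟨y, hy, mem_iUnion₂.mpr ⟨y, hyS, Metric.mem_ball_self (hrpos y hy)⟩⟩
  obtain ⟨w, hwΩ, hwU, hwV⟩ := hΩc.isPreconnected U V hUopen hVopen hcov h1 h2
  exact (hVS ⟨hwΩ, hwV⟩).2 (hUS ⟨hwΩ, hwU⟩)

end Paths

/-- **Proposition.** Let `X = Ω` be a connected noncompact manifold (an open connected
noncompact subset of `ℝᵐ`) exhausted by relatively compact domains
`Ω₀ ⋐ Ω₁ ⋐ ⋯`, with a Riemannian-type metric `g` given by a continuous positively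
homogeneous pointwise norm `F`.  Then there is a continuous `α : Ω → (1,∞)` such that for
every positive smooth `β` with `β ≥ α` off some compact set, the rescaled metric
`h = β·g` has `x ↦ dist_h(x, p)` an exhaustion function for every `p ∈ Ω` (all sublevel
sets are relatively compact in `Ω`); in particular `dist_h` is complete. -/
theorem stmt12 {m : ℕ} (Ω : Set (Fin m → ℝ)) (hΩo : IsOpen Ω) (hΩc : IsConnected Ω)
    (hΩnc : ¬ IsCompact Ω)
    (Ωseq : ℕ → Set (Fin m → ℝ))
    (hseq_open : ∀ ν, IsOpen (Ωseq ν)) (hseq_conn : ∀ ν, IsConnected (Ωseq ν))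
    (hseq_cpt : ∀ ν, IsCompact (closure (Ωseq ν)))
    (hseq_sub : ∀ ν, closure (Ωseq ν) ⊆ Ωseq (ν + 1))
    (hseq_in : ∀ ν, closure (Ωseq ν) ⊆ Ω)
    (hseq_union : (⋃ ν, Ωseq ν) = Ω)
    (F : (Fin m → ℝ) → (Fin m → ℝ) → ℝ)
    (hFcont : Continuous fun p : (Fin m → ℝ) × (Fin m → ℝ) => F p.1 p.2)
    (hFpos : ∀ z ∈ Ω, ∀ v : Fin m → ℝ, v ≠ 0 → 0 < F z v)
    (hFhom : ∀ z ∈ Ω, ∀ (c : ℝ) (v : Fin m → ℝ), F z (c • v) = |c| * F z v) :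
    ∃ α : (Fin m → ℝ) → ℝ, ContinuousOn α Ω ∧ (∀ z ∈ Ω, 1 < α z) ∧
      ∀ β : (Fin m → ℝ) → ℝ, ContDiffOn ℝ (⊤ : ℕ∞) β Ω → (∀ z ∈ Ω, 0 < β z) →
        (∃ K : Set (Fin m → ℝ), IsCompact K ∧ K ⊆ Ω ∧ ∀ z ∈ Ω \ K, α z ≤ β z) →
        ∀ p ∈ Ω, ∀ c : ℝ,
          ∃ K' : Set (Fin m → ℝ), IsCompact K' ∧ K' ⊆ Ω ∧
            {z ∈ Ω | wDist Ω β F p z ≤ c} ⊆ K' := by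
  classical
  -- a unit vector exists, else the space is trivial and Ω would be compact
  by_cases hm : ∃ v : Fin m → ℝ, ‖v‖ = 1
  swap
  · exfalso
    apply hΩnc
    have hall : ∀ v : Fin m → ℝ, v = 0 := by
      intro v
      by_contra hv
      exact hm ⟨‖v‖⁻¹ • v, by rw [norm_smul, norm_inv, norm_norm,
        inv_mul_cancel₀ (norm_ne_zero_iff.mpr hv)]⟩
    have : Ω ⊆ {0} := fun z _ => hall z
    exact (Set.finite_singleton 0).subset this |>.isCompact
  obtain ⟨v₁, hv₁⟩ := hm
  -- basic facts about the exhaustion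
  have hmono : ∀ {μ ν : ℕ}, μ ≤ ν → Ωseq μ ⊆ Ωseq ν := by
    intro μ ν h
    induction h with
    | refl => exact subset_rfl
    | step h ih => exact ih.trans (subset_closure.trans (hseq_sub _))
  have hsubΩ : ∀ ν, Ωseq ν ⊆ Ω := fun ν => subset_closure.trans (hseq_in ν)
  have hne : ∀ ν, (Ωseq ν).Nonempty := fun ν => (hseq_conn ν).nonempty
  have hexh : ∀ z ∈ Ω, ∃ N, z ∈ Ωseq N := by
    intro z hz
    rw [← hseq_union] at hz
    exact mem_iUnion.mp hz
  -- the gap widths r ν between closure (Ωseq ν) and the complement of Ωseq (ν+1)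
  have hrex : ∀ ν : ℕ, ∃ δ : ℝ, 0 < δ ∧
      ∀ z, z ∉ Ωseq (ν+1) → ∀ y ∈ closure (Ωseq ν), δ ≤ dist z y := by
    intro ν
    obtain ⟨δ, hδ, hth⟩ := (hseq_cpt ν).exists_thickening_subset_open (hseq_open (ν+1)) (hseq_sub ν)
    refine ⟨δ, hδ, fun z hz y hy => ?_⟩
    by_contra hlt
    exact hz (hth (Metric.mem_thickening_iff.mpr ⟨y, hy, not_le.mp hlt⟩))
  choose r hrpos hr using hrex
  -- the lower bounds ε ν for F on closure (Ωseq ν)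
  have hεex : ∀ ν : ℕ, ∃ e : ℝ, 0 < e ∧
      ∀ z ∈ closure (Ωseq ν), ∀ w : Fin m → ℝ, e * ‖w‖ ≤ F z w := by
    intro ν
    have hS : IsCompact ((closure (Ωseq ν)) ×ˢ (Metric.sphere (0 : Fin m → ℝ) 1)) :=
      (hseq_cpt ν).prod (isCompact_sphere 0 1)
    have hSne : ((closure (Ωseq ν)) ×ˢ (Metric.sphere (0 : Fin m → ℝ) 1)).Nonempty := by
      refine ⟨((hne ν).some, v₁), subset_closure (hne ν).some_mem, ?_⟩
      simpa [Metric.mem_sphere, dist_zero_right] using hv₁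
    obtain ⟨⟨z₀, u₀⟩, hz₀, hmin'⟩ := hS.exists_isMinOn hSne hFcont.continuousOn
    have hmin : ∀ q ∈ (closure (Ωseq ν)) ×ˢ (Metric.sphere (0 : Fin m → ℝ) 1),
        F z₀ u₀ ≤ F q.1 q.2 := fun q hq => hmin' hq
    have hz₀Ω : z₀ ∈ Ω := hseq_in ν hz₀.1
    have hu₀ : ‖u₀‖ = 1 := by simpa [Metric.mem_sphere, dist_zero_right] using hz₀.2
    have hu₀ne : u₀ ≠ 0 := fun h => by simp [h] at hu₀
    refine ⟨F z₀ u₀, hFpos z₀ hz₀Ω u₀ hu₀ne, ?_⟩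
    intro z hz w
    rcases eq_or_ne w 0 with rfl | hw
    · have h0 : F z 0 = 0 := by
        have := hFhom z (hseq_in ν hz) 0 0
        simpa using this
      simp [h0]
    · have hwu : w = ‖w‖ • (‖w‖⁻¹ • w) := by
        rw [smul_smul, mul_inv_cancel₀ (norm_ne_zero_iff.mpr hw), one_smul]
      have hnu : ‖(‖w‖⁻¹ • w)‖ = 1 := by
        rw [norm_smul, norm_inv, norm_norm, inv_mul_cancel₀ (norm_ne_zero_iff.mpr hw)]
      calc F z₀ u₀ * ‖w‖ ≤ F z (‖w‖⁻¹ • w) * ‖w‖ := by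
            apply mul_le_mul_of_nonneg_right _ (norm_nonneg w)
            exact hmin (z, ‖w‖⁻¹ • w) ⟨hz, by simpa [Metric.mem_sphere, dist_zero_right] using hnu⟩
        _ = F z w := by
            conv_rhs => rw [hwu, hFhom z (hseq_in ν hz) _ _]
            rw [abs_of_nonneg (norm_nonneg w)]; ring
  choose ε hεpos hε using hεex
  -- the conformal factors
  set a : ℕ → ℝ := fun ν => 2 * (2 / (ε (ν+1) * r ν))^2 with ha_def
  have hapos : ∀ ν, 0 < a ν := by
    intro ν
    exact mul_pos two_pos (pow_pos (div_pos two_pos (mul_pos (hεpos (ν+1)) (hrpos ν))) 2)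
  have hasqrt : ∀ ν, Real.sqrt (a ν / 2) * (ε (ν+1) * (r ν / 2)) = 1 := by
    intro ν
    have h1 : a ν / 2 = (2 / (ε (ν+1) * r ν))^2 := by rw [ha_def]; ring
    have hpos : (0:ℝ) < 2 / (ε (ν+1) * r ν) := div_pos two_pos (mul_pos (hεpos (ν+1)) (hrpos ν))
    rw [h1, Real.sqrt_sq hpos.le]
    have h2 : ε (ν+1) * r ν ≠ 0 := (mul_pos (hεpos (ν+1)) (hrpos ν)).ne'
    field_simp
    exact div_self h2
  set φ : ℕ → (Fin m → ℝ) → ℝ :=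
    fun ν z => min 1 (Metric.infDist z (closure (Ωseq ν)) / r ν) with hφ_def
  have hφnonneg : ∀ ν z, 0 ≤ φ ν z :=
    fun ν z => le_min zero_le_one (div_nonneg Metric.infDist_nonneg (hrpos ν).le)
  have hφcont : ∀ ν, Continuous (φ ν) :=
    fun ν => continuous_const.min ((Metric.continuous_infDist_pt _).div_const _)
  have hφzero : ∀ ν z, z ∈ closure (Ωseq ν) → φ ν z = 0 := by
    intro ν z hz
    simp [hφ_def, Metric.infDist_zero_of_mem hz, min_eq_right]
  have hφhalf : ∀ ν z, r ν / 2 ≤ Metric.infDist z (closure (Ωseq ν)) → 1/2 ≤ φ ν z := by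
    intro ν z hz
    refine le_min (by norm_num) ?_
    rw [le_div_iff₀ (hrpos ν)]
    linarith
  have hterm_zero : ∀ (z : Fin m → ℝ) (N : ℕ), z ∈ Ωseq N →
      ∀ ν, N ≤ ν → a ν * φ ν z = 0 := by
    intro z N hz ν hν
    rw [hφzero ν z (subset_closure (hmono hν hz)), mul_zero]
  have hsummable : ∀ z ∈ Ω, Summable (fun ν => a ν * φ ν z) := by
    intro z hz
    obtain ⟨N, hN⟩ := hexh z hz
    exact summable_of_ne_finset_zero (s := Finset.range N)
      (fun ν hν => hterm_zero z N hN ν (le_of_not_gt (fun h => hν (Finset.mem_range.mpr h))))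
  set α : (Fin m → ℝ) → ℝ := fun z => 2 + ∑' ν, a ν * φ ν z with hα_def
  have hαterm : ∀ z ∈ Ω, ∀ ν, a ν * φ ν z ≤ α z := by
    intro z hz ν
    have h1 : a ν * φ ν z ≤ ∑' ν, a ν * φ ν z :=
      Summable.le_tsum (hsummable z hz) ν (fun j _ => mul_nonneg (hapos j).le (hφnonneg j z))
    simp only [hα_def]
    linarith
  have hαcont : ContinuousOn α Ω := by
    intro z hz
    obtain ⟨N, hN⟩ := hexh z hz
    have hev : Set.EqOn α (fun w => 2 + ∑ ν ∈ Finset.range N, a ν * φ ν w) (Ωseq N) := by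
      intro w hw
      simp only [hα_def]
      congr 1
      exact tsum_eq_sum (fun ν hν =>
        hterm_zero w N hw ν (le_of_not_gt (fun h => hν (Finset.mem_range.mpr h))))
    have hc : ContinuousAt α z := by
      have hcont : Continuous fun w => 2 + ∑ ν ∈ Finset.range N, a ν * φ ν w := by
        refine continuous_const.add (continuous_finset_sum _ (fun ν _ => ?_))
        exact continuous_const.mul (hφcont ν)
      exact hcont.continuousAt.congr
        (Filter.eventuallyEq_of_mem ((hseq_open N).mem_nhds hN) (fun w hw => (hev hw).symm))
    exact hc.continuousWithinAt
  have hα1 : ∀ z ∈ Ω, 1 < α z := by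
    intro z hz
    have : 0 ≤ ∑' ν, a ν * φ ν z :=
      tsum_nonneg (fun ν => mul_nonneg (hapos ν).le (hφnonneg ν z))
    simp only [hα_def]
    linarith
  refine ⟨α, hαcont, hα1, ?_⟩
  rintro β hβ hβpos ⟨K, hKc, hKΩ, hKβ⟩ p hp c
  -- choose the base index M and the target index N
  obtain ⟨Mp, hMp⟩ := hexh p hp
  obtain ⟨Mk, hMk⟩ : ∃ Mk, K ⊆ Ωseq Mk := by
    apply hKc.elim_directed_cover Ωseq hseq_open (hKΩ.trans hseq_union.symm.subset)
    intro i j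
    exact ⟨max i j, hmono (le_max_left i j), hmono (le_max_right i j)⟩
  set M := max Mp Mk with hM_def
  have hpM : p ∈ Ωseq M := hmono (le_max_left _ _) hMp
  have hKM : K ⊆ Ωseq M := hMk.trans (hmono (le_max_right _ _))
  obtain ⟨n, hn⟩ := exists_nat_gt c
  set N := M + n + 1 with hN_def
  refine ⟨closure (Ωseq N), hseq_cpt N, hseq_in N, ?_⟩
  rintro z ⟨hzΩ, hzd⟩
  by_contra hzK
  have hzN : z ∉ Ωseq N := fun h => hzK (subset_closure h)
  -- the key estimate: every admissible path from p to z has weighted length > c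
  have key : ∀ L ∈ {L : ℝ | ∃ γ : ℝ → (Fin m → ℝ), ContDiffOn ℝ 1 γ (Set.Icc 0 1) ∧
      (∀ t ∈ Set.Icc (0:ℝ) 1, γ t ∈ Ω) ∧ γ 0 = p ∧ γ 1 = z ∧ L = wLength β F γ},
      (n : ℝ) + 1 ≤ L := by
    intro L hL
    obtain ⟨γ, hγ, hγm, hγ0, hγ1, rfl⟩ := hL
    have hγc : ContinuousOn γ (Icc 0 1) := hγ.continuousOn
    set dw := derivWithin γ (Icc (0:ℝ) 1) with hdw_def
    have hdwc : ContinuousOn dw (Icc 0 1) :=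
      hγ.continuousOn_derivWithin (uniqueDiffOn_Icc zero_lt_one) le_rfl
    have hβc : ContinuousOn β Ω := hβ.continuousOn
    set G : ℝ → ℝ := fun t => Real.sqrt (β (γ t)) * F (γ t) (dw t) with hG_def
    have hGcont : ContinuousOn G (Icc 0 1) := by
      apply ContinuousOn.mul
      · exact Real.continuous_sqrt.comp_continuousOn (hβc.comp hγc hγm)
      · exact hFcont.comp_continuousOn (hγc.prodMk hdwc)
    have hFz0 : ∀ w ∈ Ω, F w 0 = 0 := by
      intro w hw
      have := hFhom w hw 0 0
      simpa using this
    have hGnn : ∀ t ∈ Icc (0:ℝ) 1, 0 ≤ G t := by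
      intro t ht
      apply mul_nonneg (Real.sqrt_nonneg _)
      rcases eq_or_ne (dw t) 0 with h | h
      · rw [h, hFz0 _ (hγm t ht)]
      · exact (hFpos _ (hγm t ht) _ h).le
    have hGint : ∀ u v : ℝ, u ∈ Icc (0:ℝ) 1 → v ∈ Icc (0:ℝ) 1 →
        IntervalIntegrable G volume u v := by
      intro u v hu hv
      exact (hGcont.mono (uIcc_subset_Icc hu hv)).intervalIntegrable
    have hlen : wLength β F γ = ∫ t in (0:ℝ)..1, G t := by
      apply intervalIntegral.integral_congr_ae
      have h1 : ∀ᵐ t : ℝ, t ∉ ({1} : Set ℝ) :=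
        measure_eq_zero_iff_ae_notMem.mp Real.volume_singleton
      filter_upwards [h1] with t ht htm
      rw [Set.uIoc_of_le (by norm_num : (0:ℝ) ≤ 1)] at htm
      have htne : t ≠ 1 := by simpa using ht
      have htI : t ∈ Ioo (0:ℝ) 1 := ⟨htm.1, lt_of_le_of_ne htm.2 htne⟩
      have hdd : dw t = deriv γ t := derivWithin_of_mem_nhds (Icc_mem_nhds htI.1 htI.2)
      rw [hG_def]
      simp only [hdd]
    -- the inductive crossing estimate
    have main : ∀ j : ℕ, j ≤ n + 1 → ∃ t ∈ Icc (0:ℝ) 1, γ t ∉ Ωseq (N - j) ∧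
        ((j : ℝ) ≤ ∫ s in t..(1:ℝ), G s) := by
      intro j
      induction j with
      | zero =>
        intro _
        refine ⟨1, right_mem_Icc.mpr zero_le_one, ?_, by simp⟩
        simpa [hγ1] using hzN
      | succ j ih =>
        intro hj
        obtain ⟨t₁, ht₁, hγt₁, hint⟩ := ih (Nat.le_of_succ_le hj)
        set ν := N - (j+1) with hν_def
        have hν1 : ν + 1 = N - j := by omega
        have hνM : M ≤ ν := by omega
        have hγt₁' : γ t₁ ∉ Ωseq (ν+1) := by rw [hν1]; exact hγt₁
        set C := closure (Ωseq ν) with hC_def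
        have hCsub : C ⊆ Ωseq (ν+1) := hseq_sub ν
        set A := Icc (0:ℝ) t₁ ∩ γ ⁻¹' C with hA_def
        have hIccsub : Icc (0:ℝ) t₁ ⊆ Icc (0:ℝ) 1 := Icc_subset_Icc le_rfl ht₁.2
        have hA0 : (0:ℝ) ∈ A := by
          refine ⟨left_mem_Icc.mpr ht₁.1, ?_⟩
          show γ 0 ∈ C
          rw [hγ0]
          exact subset_closure (hmono hνM hpM)
        have hAclosed : IsClosed A :=
          (hγc.mono hIccsub).preimage_isClosed_of_isClosed isClosed_Icc isClosed_closure
        have hAbdd : BddAbove A := ⟨t₁, fun x hx => hx.1.2⟩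
        set a₀ := sSup A with ha₀_def
        have ha₀A : a₀ ∈ A := hAclosed.csSup_mem ⟨0, hA0⟩ hAbdd
        have ha₀I : a₀ ∈ Icc (0:ℝ) t₁ := ha₀A.1
        have hγa₀ : γ a₀ ∈ C := ha₀A.2
        have hup : ∀ t, a₀ < t → t ≤ t₁ → γ t ∉ C := by
          intro t h1 h2 hC
          exact absurd (le_csSup hAbdd ⟨⟨ha₀I.1.trans h1.le, h2⟩, hC⟩) (not_le.mpr h1)
        have ha₀t₁ : a₀ < t₁ :=
          lt_of_le_of_ne ha₀I.2 (fun h => hγt₁' (hCsub (h ▸ hγa₀)))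
        have ha₀not : γ a₀ ∉ Ωseq ν := by
          intro hmem
          have ha₀1 : a₀ ∈ Icc (0:ℝ) 1 := hIccsub ha₀I
          have hcw : ContinuousWithinAt γ (Icc 0 1) a₀ := hγc a₀ ha₀1
          have hev1 : ∀ᶠ t in nhdsWithin a₀ (Icc (0:ℝ) 1), γ t ∈ Ωseq ν :=
            hcw ((hseq_open ν).mem_nhds hmem)
          have hsub2 : Ioc a₀ t₁ ⊆ Icc (0:ℝ) 1 := fun t ht =>
            ⟨ha₀I.1.trans ht.1.le, ht.2.trans ht₁.2⟩
          have hneB : (nhdsWithin a₀ (Ioc a₀ t₁)).NeBot := by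
            apply mem_closure_iff_nhdsWithin_neBot.mp
            rw [closure_Ioc ha₀t₁.ne]
            exact left_mem_Icc.mpr ha₀t₁.le
          have hev2 : ∀ᶠ t in nhdsWithin a₀ (Ioc a₀ t₁), γ t ∈ Ωseq ν :=
            hev1.filter_mono (nhdsWithin_mono a₀ hsub2)
          obtain ⟨t, htν, htmem⟩ := (hev2.and eventually_mem_nhdsWithin).exists
          exact hup t htmem.1 htmem.2 (subset_closure (hmono (le_refl ν) htν))
        set B := Icc a₀ t₁ ∩ γ ⁻¹' (Ωseq (ν+1))ᶜ with hB_def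
        have hIccsub3 : Icc a₀ t₁ ⊆ Icc (0:ℝ) 1 := Icc_subset_Icc ha₀I.1 ht₁.2
        have hBclosed : IsClosed B :=
          (hγc.mono hIccsub3).preimage_isClosed_of_isClosed isClosed_Icc
            (hseq_open (ν+1)).isClosed_compl
        have hBne : t₁ ∈ B := ⟨right_mem_Icc.mpr ha₀t₁.le, hγt₁'⟩
        have hBbdd : BddBelow B := ⟨a₀, fun x hx => hx.1.1⟩
        set b := sInf B with hb_def
        have hbB : b ∈ B := hBclosed.csInf_mem ⟨t₁, hBne⟩ hBbdd
        have hbI : b ∈ Icc a₀ t₁ := hbB.1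
        have hγb : γ b ∉ Ωseq (ν+1) := hbB.2
        have hlow : ∀ t, a₀ ≤ t → t < b → γ t ∈ Ωseq (ν+1) := by
          intro t h1 h2
          by_contra hcon
          exact absurd (csInf_le hBbdd ⟨⟨h1, h2.le.trans hbI.2⟩, hcon⟩) (not_le.mpr h2)
        have ha₀b : a₀ < b :=
          lt_of_le_of_ne hbI.1 (fun h => hγb (hCsub (h ▸ hγa₀)))
        set A' := Icc a₀ b ∩ (fun t => Metric.infDist (γ t) C) ⁻¹' (Iic (r ν / 2)) with hA'_def
        have hIccsub4 : Icc a₀ b ⊆ Icc (0:ℝ) 1 := Icc_subset_Icc ha₀I.1 (hbI.2.trans ht₁.2)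
        have hA'closed : IsClosed A' := by
          apply ContinuousOn.preimage_isClosed_of_isClosed _ isClosed_Icc isClosed_Iic
          exact (Metric.continuous_infDist_pt C).comp_continuousOn (hγc.mono hIccsub4)
        have hA'ne : a₀ ∈ A' := by
          refine ⟨left_mem_Icc.mpr ha₀b.le, ?_⟩
          simp only [mem_preimage, mem_Iic]
          rw [Metric.infDist_zero_of_mem hγa₀]
          linarith [hrpos ν]
        have hA'bdd : BddAbove A' := ⟨b, fun x hx => hx.1.2⟩
        set a' := sSup A' with ha'_def
        have ha'A' : a' ∈ A' := hA'closed.csSup_mem ⟨a₀, hA'ne⟩ hA'bdd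
        have ha'I : a' ∈ Icc a₀ b := ha'A'.1
        have hDa' : Metric.infDist (γ a') C ≤ r ν / 2 := ha'A'.2
        have hCne : C.Nonempty := (hne ν).closure
        have hDb : r ν ≤ Metric.infDist (γ b) C := by
          by_contra hlt
          obtain ⟨y, hy, hdy⟩ := (Metric.infDist_lt_iff hCne).mp (not_le.mp hlt)
          exact absurd (hr ν (γ b) hγb y hy) (not_le.mpr hdy)
        have ha'b : a' < b := lt_of_le_of_ne ha'I.2 (fun h => by
          rw [h] at hDa'; linarith [hrpos ν])
        have hmid : ∀ t, a' < t → t ≤ b → r ν / 2 ≤ Metric.infDist (γ t) C := by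
          intro t h1 h2
          by_contra hcon
          exact absurd (le_csSup hA'bdd ⟨⟨ha'I.1.trans h1.le, h2⟩, (not_le.mp hcon).le⟩)
            (not_le.mpr h1)
        have ha'0 : (0:ℝ) ≤ a' := ha₀I.1.trans ha'I.1
        have hb1 : b ≤ 1 := hbI.2.trans ht₁.2
        have hsub5 : Icc a' b ⊆ Icc (0:ℝ) 1 := Icc_subset_Icc ha'0 hb1
        have hm1 : a' ∈ Icc (0:ℝ) 1 := hsub5 (left_mem_Icc.mpr ha'b.le)
        have hm2 : b ∈ Icc (0:ℝ) 1 := hsub5 (right_mem_Icc.mpr ha'b.le)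
        have hpt : ∀ t ∈ Ioo a' b, Real.sqrt (a ν / 2) * (ε (ν+1) * ‖dw t‖) ≤ G t := by
          intro t ht
          have htI : t ∈ Icc (0:ℝ) 1 := hsub5 ⟨ht.1.le, ht.2.le⟩
          have hγtΩ1 : γ t ∈ Ωseq (ν+1) := hlow t (ha'I.1.trans ht.1.le) ht.2
          have hγtΩ : γ t ∈ Ω := hγm t htI
          have hD : r ν / 2 ≤ Metric.infDist (γ t) C := hmid t ht.1 ht.2.le
          have hnotC : γ t ∉ C := by
            intro h
            rw [Metric.infDist_zero_of_mem h] at hD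
            linarith [hrpos ν]
          have hnotK : γ t ∉ K := fun h => hnotC (subset_closure (hmono hνM (hKM h)))
          have hβα : α (γ t) ≤ β (γ t) := hKβ _ ⟨hγtΩ, hnotK⟩
          have hφt : 1/2 ≤ φ ν (γ t) := hφhalf ν _ hD
          have hβlow : a ν / 2 ≤ β (γ t) := by
            have h1 : a ν * φ ν (γ t) ≤ α (γ t) := hαterm _ hγtΩ ν
            nlinarith [hapos ν]
          have h1 : Real.sqrt (a ν / 2) ≤ Real.sqrt (β (γ t)) := Real.sqrt_le_sqrt hβlow
          have h2 : ε (ν+1) * ‖dw t‖ ≤ F (γ t) (dw t) := hε (ν+1) _ (subset_closure hγtΩ1) _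
          exact mul_le_mul h1 h2 (mul_nonneg (hεpos (ν+1)).le (norm_nonneg _))
            (Real.sqrt_nonneg _)
        have hdwint : IntervalIntegrable dw volume a' b :=
          (hdwc.mono (uIcc_subset_Icc hm1 hm2)).intervalIntegrable
        have hFTC : ∫ t in a'..b, dw t = γ b - γ a' := by
          apply intervalIntegral.integral_eq_sub_of_hasDeriv_right_of_le ha'b.le
            (hγc.mono hsub5) _ hdwint
          intro t ht
          have htI : t ∈ Icc (0:ℝ) 1 := hsub5 ⟨ht.1.le, ht.2.le⟩
          have h1 : HasDerivWithinAt γ (dw t) (Icc (0:ℝ) 1) t :=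
            ((hγ.differentiableOn one_ne_zero) t htI).hasDerivWithinAt
          exact (h1.hasDerivAt (Icc_mem_nhds (lt_of_le_of_lt ha'0 ht.1) (lt_of_lt_of_le ht.2 hb1))).hasDerivWithinAt
        have hnormge : r ν / 2 ≤ ‖γ b - γ a'‖ := by
          have h3 : Metric.infDist (γ b) C ≤ Metric.infDist (γ a') C + dist (γ b) (γ a') :=
            Metric.infDist_le_infDist_add_dist
          rw [dist_eq_norm] at h3
          linarith
        have hintdw : r ν / 2 ≤ ∫ t in a'..b, ‖dw t‖ := by
          calc r ν / 2 ≤ ‖γ b - γ a'‖ := hnormge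
            _ = ‖∫ t in a'..b, dw t‖ := by rw [hFTC]
            _ ≤ ∫ t in a'..b, ‖dw t‖ := intervalIntegral.norm_integral_le_integral_norm ha'b.le
        have hstep : 1 ≤ ∫ t in a'..b, G t := by
          have hlhsint : IntervalIntegrable
              (fun t => Real.sqrt (a ν / 2) * (ε (ν+1) * ‖dw t‖)) volume a' b := by
            apply ContinuousOn.intervalIntegrable
            exact continuousOn_const.mul (continuousOn_const.mul
              ((hdwc.mono (uIcc_subset_Icc hm1 hm2)).norm))
          have hmono_int : (∫ t in a'..b, Real.sqrt (a ν / 2) * (ε (ν+1) * ‖dw t‖)) ≤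
              ∫ t in a'..b, G t := by
            apply intervalIntegral.integral_mono_ae_restrict ha'b.le hlhsint
              (hGint a' b hm1 hm2)
            have hae2 : ∀ᵐ t : ℝ, t ∉ ({a', b} : Set ℝ) :=
              measure_eq_zero_iff_ae_notMem.mp
                (((Set.finite_singleton b).insert a').measure_zero volume)
            rw [Filter.EventuallyLE, ae_restrict_iff' measurableSet_Icc]
            filter_upwards [hae2] with t ht htI
            have htne : t ≠ a' ∧ t ≠ b := by
              constructor <;> intro h <;> exact ht (by simp [h])
            exact hpt t ⟨lt_of_le_of_ne htI.1 (Ne.symm htne.1), lt_of_le_of_ne htI.2 htne.2⟩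
          have hc2 : (∫ t in a'..b, Real.sqrt (a ν / 2) * (ε (ν+1) * ‖dw t‖)) =
              Real.sqrt (a ν / 2) * (ε (ν+1) * ∫ t in a'..b, ‖dw t‖) := by
            simp only [intervalIntegral.integral_const_mul]
          calc (1:ℝ) = Real.sqrt (a ν / 2) * (ε (ν+1) * (r ν / 2)) := (hasqrt ν).symm
            _ ≤ Real.sqrt (a ν / 2) * (ε (ν+1) * ∫ t in a'..b, ‖dw t‖) := by
                apply mul_le_mul_of_nonneg_left _ (Real.sqrt_nonneg _)
                exact mul_le_mul_of_nonneg_left hintdw (hεpos (ν+1)).le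
            _ = ∫ t in a'..b, Real.sqrt (a ν / 2) * (ε (ν+1) * ‖dw t‖) := hc2.symm
            _ ≤ ∫ t in a'..b, G t := hmono_int
        -- assemble
        have hm0 : a₀ ∈ Icc (0:ℝ) 1 := hIccsub ha₀I
        have hm3 : t₁ ∈ Icc (0:ℝ) 1 := ht₁
        have hone : (1:ℝ) ∈ Icc (0:ℝ) 1 := right_mem_Icc.mpr zero_le_one
        have s1 : ∫ s in a₀..(1:ℝ), G s = (∫ s in a₀..a', G s) + ∫ s in a'..(1:ℝ), G s :=
          (intervalIntegral.integral_add_adjacent_intervals (hGint _ _ hm0 hm1)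
            (hGint _ _ hm1 hone)).symm
        have s2 : ∫ s in a'..(1:ℝ), G s = (∫ s in a'..b, G s) + ∫ s in b..(1:ℝ), G s :=
          (intervalIntegral.integral_add_adjacent_intervals (hGint _ _ hm1 hm2)
            (hGint _ _ hm2 hone)).symm
        have s3 : ∫ s in b..(1:ℝ), G s = (∫ s in b..t₁, G s) + ∫ s in t₁..(1:ℝ), G s :=
          (intervalIntegral.integral_add_adjacent_intervals (hGint _ _ hm2 hm3)
            (hGint _ _ hm3 hone)).symm
        have n1 : 0 ≤ ∫ s in a₀..a', G s :=
          intervalIntegral.integral_nonneg ha'I.1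
            (fun u hu => hGnn u ⟨hm0.1.trans hu.1, hu.2.trans hm1.2⟩)
        have n2 : 0 ≤ ∫ s in b..t₁, G s :=
          intervalIntegral.integral_nonneg hbI.2
            (fun u hu => hGnn u ⟨hm2.1.trans hu.1, hu.2.trans hm3.2⟩)
        refine ⟨a₀, hm0, ha₀not, ?_⟩
        push_cast
        rw [s1, s2, s3]
        linarith
    obtain ⟨t, htI, _, hfin⟩ := main (n+1) le_rfl
    have h0t : 0 ≤ ∫ s in (0:ℝ)..t, G s :=
      intervalIntegral.integral_nonneg htI.1 (fun u hu => hGnn u ⟨hu.1, hu.2.trans htI.2⟩)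
    have hone : (1:ℝ) ∈ Icc (0:ℝ) 1 := right_mem_Icc.mpr zero_le_one
    have hzero : (0:ℝ) ∈ Icc (0:ℝ) 1 := left_mem_Icc.mpr zero_le_one
    have htot : ∫ s in (0:ℝ)..1, G s = (∫ s in (0:ℝ)..t, G s) + ∫ s in t..(1:ℝ), G s :=
      (intervalIntegral.integral_add_adjacent_intervals (hGint _ _ hzero htI)
        (hGint _ _ htI hone)).symm
    rw [hlen]
    push_cast at hfin ⊢
    linarith

  have hnonempty : {L : ℝ | ∃ γ : ℝ → (Fin m → ℝ), ContDiffOn ℝ 1 γ (Set.Icc 0 1) ∧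
      (∀ t ∈ Set.Icc (0:ℝ) 1, γ t ∈ Ω) ∧ γ 0 = p ∧ γ 1 = z ∧ L = wLength β F γ}.Nonempty := by
    obtain ⟨γ, hγ, hγm, hγ0, hγ1, _, _⟩ := IsConnected.jc1 hΩo hΩc hp hzΩ
    exact ⟨wLength β F γ, γ, hγ.contDiffOn, hγm, hγ0, hγ1, rfl⟩
  have hge : (n : ℝ) + 1 ≤ wDist Ω β F p z := le_csInf hnonempty key
  linarith
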